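/- Let f : [0,1] → ℝ be absolutely continuous with square-integrable derivative, and g a step function constant on each interval (t_{j-1}, t_j] with t_j = j/p. Then for any ε > 0, Δ = f - g satisfies ‖Δ‖²_p ≤ (1+ε)‖Δ‖² + (1+ε⁻¹)‖f'‖²/p². -/

import Mathlib

open MeasureTheory intervalIntegral

lemma sq_integral_le_aux {μ : Measure ℝ} [IsFiniteMeasure μ] {f : ℝ → ℝ} (hf : MemLp f 2 μ) :
    (∫ t, f t ∂μ) ^ 2 ≤ (μ Set.univ).toReal * ∫ t, f t ^ 2 ∂μ := by
  have h1 : MemLp (fun _ : ℝ => (1 : ℝ)) 2 μ := memLp_const 1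
  have h2 : ENNReal.ofReal (2:ℝ) = 2 := by norm_num
  have hpq : (2:ℝ).HolderConjugate 2 := ⟨by norm_num, by norm_num, by norm_num⟩
  have key := integral_mul_norm_le_Lp_mul_Lq hpq (h2 ▸ hf) (h2 ▸ h1)
  have e1 : ∀ x : ℝ, |x| ^ (2:ℝ) = x ^ 2 := fun x => by
    rw [show (2:ℝ) = ((2:ℕ):ℝ) by norm_num, Real.rpow_natCast, sq_abs]
  simp only [norm_one, mul_one, Real.norm_eq_abs, Real.one_rpow, e1] at key
  have hM : (0:ℝ) ≤ (μ Set.univ).toReal := ENNReal.toReal_nonneg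
  have hA : (0:ℝ) ≤ ∫ t, f t ^ 2 ∂μ := integral_nonneg fun x => sq_nonneg _
  have hIc : ∫ t, (1:ℝ) ∂μ = (μ Set.univ).toReal := by simp [Measure.real]
  rw [hIc] at key
  calc (∫ t, f t ∂μ) ^ 2 = |∫ t, f t ∂μ| ^ 2 := (sq_abs _).symm
    _ ≤ (∫ t, |f t| ∂μ) ^ 2 := by
        have h := (norm_integral_le_integral_norm (μ := μ) f)
        simp only [Real.norm_eq_abs] at h
        exact pow_le_pow_left₀ (abs_nonneg _) h 2
    _ ≤ ((∫ t, f t ^ 2 ∂μ) ^ (1/2:ℝ) * ((μ Set.univ).toReal) ^ (1/2:ℝ)) ^ 2 := by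
        refine pow_le_pow_left₀ (integral_nonneg fun x => abs_nonneg _) key 2
    _ = (μ Set.univ).toReal * ∫ t, f t ^ 2 ∂μ := by
        rw [mul_pow, ← Real.rpow_natCast ((∫ t, f t ^ 2 ∂μ) ^ (1/2:ℝ)) 2,
          ← Real.rpow_natCast (((μ Set.univ).toReal) ^ (1/2:ℝ)) 2,
          ← Real.rpow_mul hA, ← Real.rpow_mul hM]
        norm_num [mul_comm]

lemma key_interval (f f' : ℝ → ℝ)
    (hderiv : ∀ x ∈ Set.Icc (0:ℝ) 1, HasDerivAt f (f' x) x)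
    (hint : IntervalIntegrable f' volume 0 1)
    (hf'2 : IntervalIntegrable (fun t => f' t ^ 2) volume 0 1)
    (a b : ℝ) (h0 : 0 ≤ a) (hab : a ≤ b) (hb1 : b ≤ 1) (c ε : ℝ) (hε : 0 < ε) :
    (b - a) * (f b - c) ^ 2 ≤ (1 + ε) * (∫ t in a..b, (f t - c) ^ 2)
      + (1 + ε⁻¹) * (b - a) ^ 2 * (∫ t in a..b, f' t ^ 2) := by
  have hsub : Set.Icc a b ⊆ Set.Icc (0:ℝ) 1 := Set.Icc_subset_Icc h0 hb1
  have hcont : ContinuousOn f (Set.Icc a b) := fun x hx =>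
    ((hderiv x (hsub hx)).continuousAt).continuousWithinAt
  -- integrability of (f t - c)^2 on [a,b]
  have hi1 : IntervalIntegrable (fun t => (f t - c) ^ 2) volume a b :=
    (((hcont.sub continuousOn_const).pow 2)).intervalIntegrable_of_Icc hab
  have hf'2ab : IntervalIntegrable (fun t => f' t ^ 2) volume a b :=
    hf'2.mono_set (by rw [Set.uIcc_of_le hab, Set.uIcc_of_le zero_le_one]; exact hsub)
  have hJnn : 0 ≤ ∫ t in a..b, f' t ^ 2 :=
    intervalIntegral.integral_nonneg hab fun x _ => sq_nonneg _
  -- pointwise bound for t ∈ [a,b]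
  have hpt : ∀ t ∈ Set.Icc a b, (f b - c) ^ 2
      ≤ (1 + ε) * (f t - c) ^ 2 + (1 + ε⁻¹) * ((b - a) * ∫ s in a..b, f' s ^ 2) := by
    intro t ht
    have htb : t ≤ b := ht.2
    have hat : a ≤ t := ht.1
    have hsub' : Set.uIcc t b ⊆ Set.Icc (0:ℝ) 1 := by
      rw [Set.uIcc_of_le htb]; exact (Set.Icc_subset_Icc (h0.trans hat) hb1)
    -- FTC
    have hftc : ∫ s in t..b, f' s = f b - f t :=
      intervalIntegral.integral_eq_sub_of_hasDerivAt
        (fun x hx => hderiv x (hsub' hx))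
        (hint.mono_set (by
          rw [Set.uIcc_of_le htb, Set.uIcc_of_le zero_le_one]
          exact Set.Icc_subset_Icc (h0.trans hat) hb1))
    -- Cauchy-Schwarz on [t,b]
    haveI : IsFiniteMeasure (volume.restrict (Set.Ioc t b)) := by
      constructor
      rw [Measure.restrict_apply_univ, Real.volume_Ioc]
      exact ENNReal.ofReal_lt_top
    have hmeas : AEStronglyMeasurable f' (volume.restrict (Set.Ioc t b)) := by
      apply ((measurable_deriv f).aestronglyMeasurable).congr
      have hnull : volume ({(1:ℝ)} : Set ℝ) = 0 := Real.volume_singleton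
      have h1 : ∀ᵐ x ∂(volume.restrict (Set.Ioc t b)), x ∉ ({(1:ℝ)} : Set ℝ) :=
        ae_restrict_of_ae ((measure_eq_zero_iff_ae_notMem).mp hnull)
      have h2 : ∀ᵐ x ∂(volume.restrict (Set.Ioc t b)), x ∈ Set.Ioc t b :=
        ae_restrict_mem measurableSet_Ioc
      filter_upwards [h1, h2] with x hx1 hx2
      have hx01 : x ∈ Set.Ioo (0:ℝ) 1 := by
        constructor
        · exact lt_of_le_of_lt (h0.trans hat) hx2.1
        · exact lt_of_le_of_ne (hx2.2.trans hb1) (by simpa using hx1)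
      exact (hderiv x ⟨hx01.1.le, hx01.2.le⟩).deriv
    have hsq : IntegrableOn (fun s => f' s ^ 2) (Set.Ioc t b) volume := by
      have := hf'2.mono_set (show Set.uIcc t b ⊆ Set.uIcc (0:ℝ) 1 by
        rw [Set.uIcc_of_le htb, Set.uIcc_of_le zero_le_one]
        exact Set.Icc_subset_Icc (h0.trans hat) hb1)
      exact (intervalIntegrable_iff_integrableOn_Ioc_of_le htb).mp this
    have hmem : MemLp f' 2 (volume.restrict (Set.Ioc t b)) :=
      (memLp_two_iff_integrable_sq hmeas).mpr hsq
    have hcs := sq_integral_le_aux hmem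
    rw [Measure.restrict_apply_univ, Real.volume_Ioc, ENNReal.toReal_ofReal (by linarith)] at hcs
    have hcs' : (∫ s in t..b, f' s) ^ 2 ≤ (b - t) * ∫ s in t..b, f' s ^ 2 := by
      rw [intervalIntegral.integral_of_le htb, intervalIntegral.integral_of_le htb]
      exact hcs
    have hmono : (∫ s in t..b, f' s ^ 2) ≤ ∫ s in a..b, f' s ^ 2 := by
      apply intervalIntegral.integral_mono_interval hat htb le_rfl
      · exact Filter.Eventually.of_forall fun x => sq_nonneg _
      · exact hf'2ab
    have hJtnn : 0 ≤ ∫ s in t..b, f' s ^ 2 :=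
      intervalIntegral.integral_nonneg htb fun x _ => sq_nonneg _
    have hb2 : (f b - f t) ^ 2 ≤ (b - a) * ∫ s in a..b, f' s ^ 2 := by
      rw [← hftc]
      calc (∫ s in t..b, f' s) ^ 2 ≤ (b - t) * ∫ s in t..b, f' s ^ 2 := hcs'
        _ ≤ (b - a) * ∫ s in a..b, f' s ^ 2 :=
          mul_le_mul (by linarith) hmono hJtnn (by linarith)
    -- Young-type inequality
    have hyoung : (f b - c) ^ 2 ≤ (1 + ε) * (f t - c) ^ 2 + (1 + ε⁻¹) * (f b - f t) ^ 2 := by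
      have hx := sq_nonneg (ε * (f t - c) - (f b - f t))
      have hinv : ε⁻¹ * ε = 1 := inv_mul_cancel₀ hε.ne'
      have h3 : 0 ≤ ε⁻¹ * (ε * (f t - c) - (f b - f t)) ^ 2 :=
        mul_nonneg (inv_nonneg.mpr hε.le) hx
      nlinarith [h3, hinv, sq_nonneg (f t - c), sq_nonneg (f b - f t)]
    calc (f b - c) ^ 2 ≤ (1 + ε) * (f t - c) ^ 2 + (1 + ε⁻¹) * (f b - f t) ^ 2 := hyoung
      _ ≤ (1 + ε) * (f t - c) ^ 2 + (1 + ε⁻¹) * ((b - a) * ∫ s in a..b, f' s ^ 2) := by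
          have : (0:ℝ) ≤ 1 + ε⁻¹ := by positivity
          nlinarith [mul_le_mul_of_nonneg_left hb2 this]
    -- integrate
  have hi2 : IntervalIntegrable
      (fun t => (1 + ε) * (f t - c) ^ 2 + (1 + ε⁻¹) * ((b - a) * ∫ s in a..b, f' s ^ 2))
      volume a b :=
    (hi1.const_mul _).add (intervalIntegrable_const)
  have hmain := intervalIntegral.integral_mono_on hab (intervalIntegrable_const) hi2 hpt
  rw [intervalIntegral.integral_const, smul_eq_mul] at hmain
  rw [intervalIntegral.integral_add (hi1.const_mul _) intervalIntegrable_const,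
    intervalIntegral.integral_const_mul, intervalIntegral.integral_const, smul_eq_mul] at hmain
  nlinarith [hmain]

lemma f'_int (f f' : ℝ → ℝ)
    (hderiv : ∀ x ∈ Set.Icc (0:ℝ) 1, HasDerivAt f (f' x) x)
    (hf'2 : IntervalIntegrable (fun t => f' t ^ 2) volume 0 1) :
    IntervalIntegrable f' volume 0 1 := by
  rw [intervalIntegrable_iff_integrableOn_Ioc_of_le zero_le_one]
  have hsq : IntegrableOn (fun t => f' t ^ 2) (Set.Ioc (0:ℝ) 1) volume :=
    (intervalIntegrable_iff_integrableOn_Ioc_of_le zero_le_one).mp hf'2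
  have hmeas : AEStronglyMeasurable f' (volume.restrict (Set.Ioc (0:ℝ) 1)) := by
    apply ((measurable_deriv f).aestronglyMeasurable).congr
    have hnull : volume ({(1:ℝ)} : Set ℝ) = 0 := Real.volume_singleton
    have h1 : ∀ᵐ x ∂(volume.restrict (Set.Ioc (0:ℝ) 1)), x ∉ ({(1:ℝ)} : Set ℝ) :=
      ae_restrict_of_ae ((measure_eq_zero_iff_ae_notMem).mp hnull)
    have h2 : ∀ᵐ x ∂(volume.restrict (Set.Ioc (0:ℝ) 1)), x ∈ Set.Ioc (0:ℝ) 1 :=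
      ae_restrict_mem measurableSet_Ioc
    filter_upwards [h1, h2] with x hx1 hx2
    have hx01 : x ∈ Set.Ioo (0:ℝ) 1 :=
      ⟨hx2.1, lt_of_le_of_ne hx2.2 (by simpa using hx1)⟩
    exact (hderiv x ⟨hx01.1.le, hx01.2.le⟩).deriv
  have hg : Integrable (fun t => (1 + f' t ^ 2) / 2) (volume.restrict (Set.Ioc (0:ℝ) 1)) := by
    haveI : IsFiniteMeasure (volume.restrict (Set.Ioc (0:ℝ) 1)) := by
      constructor
      rw [Measure.restrict_apply_univ, Real.volume_Ioc]
      exact ENNReal.ofReal_lt_top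
    exact ((integrable_const (1:ℝ)).add hsq).div_const 2
  refine hg.mono' hmeas (Filter.Eventually.of_forall fun t => ?_)
  rw [Real.norm_eq_abs]
  nlinarith [sq_nonneg (|f' t| - 1), sq_abs (f' t)]

/-- For `f` absolutely continuous on `[0,1]` with square-integrable
derivative `f'` and `g` a step function constant on each `((j-1)/p, j/p]`, for any
`ε > 0` the difference `Δ = f - g` satisfies
`‖Δ‖²_p ≤ (1+ε) ‖Δ‖² + (1+ε⁻¹) ‖f'‖² / p²`. -/
theorem stmt1 (p : ℕ) (hp : 1 ≤ p) (f f' g : ℝ → ℝ) (c : ℕ → ℝ)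
    (hderiv : ∀ x ∈ Set.Icc (0:ℝ) 1, HasDerivAt f (f' x) x)
    (hf'2 : IntervalIntegrable (fun t => f' t ^ 2) volume 0 1)
    (hg : ∀ j ∈ Finset.Icc 1 p, ∀ t ∈ Set.Ioc (((j:ℝ) - 1) / p) ((j:ℝ) / p), g t = c j)
    (ε : ℝ) (hε : 0 < ε) :
    (1 / (p:ℝ)) * ∑ j ∈ Finset.Icc 1 p, (f ((j:ℝ)/p) - g ((j:ℝ)/p)) ^ 2
      ≤ (1 + ε) * (∫ t in (0:ℝ)..1, (f t - g t) ^ 2)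
        + (1 + ε⁻¹) * (∫ t in (0:ℝ)..1, f' t ^ 2) / (p:ℝ) ^ 2 := by
  have hp0 : (0:ℝ) < p := by exact_mod_cast Nat.lt_of_lt_of_le Nat.zero_lt_one hp
  have hint := f'_int f f' hderiv hf'2
  have hcont01 : ContinuousOn f (Set.Icc (0:ℝ) 1) := fun x hx =>
    ((hderiv x hx).continuousAt).continuousWithinAt
  -- endpoints helpers, for j ∈ Icc 1 p
  have hj_bounds : ∀ j ∈ Finset.Icc 1 p,
      0 ≤ ((j:ℝ) - 1) / p ∧ ((j:ℝ) - 1) / p ≤ (j:ℝ) / p ∧ (j:ℝ) / p ≤ 1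
        ∧ (j:ℝ)/p - ((j:ℝ) - 1)/p = 1/(p:ℝ) := by
    intro j hj
    obtain ⟨hj1, hjp⟩ := Finset.mem_Icc.mp hj
    have hj1R : (1:ℝ) ≤ (j:ℝ) := by exact_mod_cast hj1
    have hjpR : (j:ℝ) ≤ (p:ℝ) := by exact_mod_cast hjp
    refine ⟨div_nonneg (by linarith) hp0.le, by gcongr <;> linarith,
      (div_le_one hp0).mpr hjpR, ?_⟩
    field_simp
    ring
  -- congruence of integrals on each subinterval
  have hIeq : ∀ j ∈ Finset.Icc 1 p,
      (∫ t in (((j:ℝ) - 1)/p)..((j:ℝ)/p), (f t - c j) ^ 2)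
        = ∫ t in (((j:ℝ) - 1)/p)..((j:ℝ)/p), (f t - g t) ^ 2 := by
    intro j hj
    obtain ⟨h0, hab, hb1, hba⟩ := hj_bounds j hj
    rw [intervalIntegral.integral_of_le hab, intervalIntegral.integral_of_le hab]
    apply setIntegral_congr_fun measurableSet_Ioc
    intro t ht
    show (f t - c j) ^ 2 = (f t - g t) ^ 2
    rw [hg j hj t ht]
  -- per-j integrability of (f - g)^2
  have hiFG : ∀ j ∈ Finset.Icc 1 p,
      IntervalIntegrable (fun t => (f t - g t) ^ 2) volume (((j:ℝ) - 1)/p) ((j:ℝ)/p) := by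
    intro j hj
    obtain ⟨h0, hab, hb1, hba⟩ := hj_bounds j hj
    have hic : IntervalIntegrable (fun t => (f t - c j) ^ 2) volume (((j:ℝ) - 1)/p) ((j:ℝ)/p) :=
      (((hcont01.mono (Set.Icc_subset_Icc h0 hb1)).sub continuousOn_const).pow 2).intervalIntegrable_of_Icc hab
    rw [intervalIntegrable_iff_integrableOn_Ioc_of_le hab] at hic ⊢
    exact hic.congr_fun (fun t ht => by rw [hg j hj t ht]) measurableSet_Ioc
  have hiF2 : ∀ j ∈ Finset.Icc 1 p,
      IntervalIntegrable (fun t => f' t ^ 2) volume (((j:ℝ) - 1)/p) ((j:ℝ)/p) := by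
    intro j hj
    obtain ⟨h0, hab, hb1, hba⟩ := hj_bounds j hj
    exact hf'2.mono_set (by
      rw [Set.uIcc_of_le hab, Set.uIcc_of_le zero_le_one]
      exact Set.Icc_subset_Icc h0 hb1)
  -- per-j inequality
  have hj_ineq : ∀ j ∈ Finset.Icc 1 p,
      (1/(p:ℝ)) * (f ((j:ℝ)/p) - g ((j:ℝ)/p)) ^ 2
        ≤ (1 + ε) * (∫ t in (((j:ℝ) - 1)/p)..((j:ℝ)/p), (f t - g t) ^ 2)
          + ((1 + ε⁻¹)/(p:ℝ)^2) * (∫ t in (((j:ℝ) - 1)/p)..((j:ℝ)/p), f' t ^ 2) := by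
    intro j hj
    obtain ⟨h0, hab, hb1, hba⟩ := hj_bounds j hj
    have key := key_interval f f' hderiv hint hf'2 (((j:ℝ) - 1)/p) ((j:ℝ)/p) h0 hab hb1 (c j) ε hε
    rw [hba] at key
    have hgb : g ((j:ℝ)/p) = c j := by
      apply hg j hj
      constructor
      · have : (0:ℝ) < 1/(p:ℝ) := by positivity
        linarith
      · exact le_rfl
    rw [hgb, ← hIeq j hj]
    have e : (1 + ε⁻¹) / (p:ℝ)^2 = (1 + ε⁻¹) * (1/(p:ℝ))^2 := by ring
    rw [e]
    exact key
  -- sum the inequalities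
  have hsum_le : (1 / (p:ℝ)) * ∑ j ∈ Finset.Icc 1 p, (f ((j:ℝ)/p) - g ((j:ℝ)/p)) ^ 2
      ≤ ∑ j ∈ Finset.Icc 1 p, ((1 + ε) * (∫ t in (((j:ℝ) - 1)/p)..((j:ℝ)/p), (f t - g t) ^ 2)
          + ((1 + ε⁻¹)/(p:ℝ)^2) * (∫ t in (((j:ℝ) - 1)/p)..((j:ℝ)/p), f' t ^ 2)) := by
    rw [Finset.mul_sum]
    exact Finset.sum_le_sum hj_ineq
  -- adjacent-interval sums
  have reindex : ∀ F : ℕ → ℝ, ∑ j ∈ Finset.Icc 1 p, F j = ∑ k ∈ Finset.range p, F (k+1) := by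
    intro F
    rw [← Finset.Ico_add_one_right_eq_Icc, Finset.sum_Ico_eq_sum_range]
    simp [Nat.add_comm]
  have hsum1 : ∑ j ∈ Finset.Icc 1 p, (∫ t in (((j:ℝ) - 1)/p)..((j:ℝ)/p), (f t - g t) ^ 2)
      = ∫ t in (0:ℝ)..1, (f t - g t) ^ 2 := by
    rw [reindex]
    have hend : ∀ k : ℕ, ((((k+1:ℕ)):ℝ) - 1)/p = ((k:ℕ):ℝ)/p := by
      intro k; push_cast; ring
    calc ∑ k ∈ Finset.range p, (∫ t in ((((k+1:ℕ)):ℝ) - 1)/p..(((k+1:ℕ)):ℝ)/p, (f t - g t) ^ 2)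
        = ∑ k ∈ Finset.range p, (∫ t in ((k:ℕ):ℝ)/p..(((k+1:ℕ)):ℝ)/p, (f t - g t) ^ 2) := by
          refine Finset.sum_congr rfl fun k _ => ?_
          rw [hend k]
      _ = ∫ t in (((0:ℕ):ℝ)/p)..(((p:ℕ):ℝ)/p), (f t - g t) ^ 2 := by
          apply intervalIntegral.sum_integral_adjacent_intervals
          intro k hk
          have := hiFG (k+1) (Finset.mem_Icc.mpr ⟨Nat.le_add_left 1 k, Nat.succ_le_of_lt hk⟩)
          rwa [hend k] at this
      _ = ∫ t in (0:ℝ)..1, (f t - g t) ^ 2 := by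
          norm_num
          rw [div_self hp0.ne']
  have hsum2 : ∑ j ∈ Finset.Icc 1 p, (∫ t in (((j:ℝ) - 1)/p)..((j:ℝ)/p), f' t ^ 2)
      = ∫ t in (0:ℝ)..1, f' t ^ 2 := by
    rw [reindex]
    have hend : ∀ k : ℕ, ((((k+1:ℕ)):ℝ) - 1)/p = ((k:ℕ):ℝ)/p := by
      intro k; push_cast; ring
    calc ∑ k ∈ Finset.range p, (∫ t in ((((k+1:ℕ)):ℝ) - 1)/p..(((k+1:ℕ)):ℝ)/p, f' t ^ 2)
        = ∑ k ∈ Finset.range p, (∫ t in ((k:ℕ):ℝ)/p..(((k+1:ℕ)):ℝ)/p, f' t ^ 2) := by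
          refine Finset.sum_congr rfl fun k _ => ?_
          rw [hend k]
      _ = ∫ t in (((0:ℕ):ℝ)/p)..(((p:ℕ):ℝ)/p), f' t ^ 2 := by
          apply intervalIntegral.sum_integral_adjacent_intervals
          intro k hk
          have := hiF2 (k+1) (Finset.mem_Icc.mpr ⟨Nat.le_add_left 1 k, Nat.succ_le_of_lt hk⟩)
          rwa [hend k] at this
      _ = ∫ t in (0:ℝ)..1, f' t ^ 2 := by
          norm_num
          rw [div_self hp0.ne']
  calc (1 / (p:ℝ)) * ∑ j ∈ Finset.Icc 1 p, (f ((j:ℝ)/p) - g ((j:ℝ)/p)) ^ 2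
      ≤ ∑ j ∈ Finset.Icc 1 p, ((1 + ε) * (∫ t in (((j:ℝ) - 1)/p)..((j:ℝ)/p), (f t - g t) ^ 2)
          + ((1 + ε⁻¹)/(p:ℝ)^2) * (∫ t in (((j:ℝ) - 1)/p)..((j:ℝ)/p), f' t ^ 2)) := hsum_le
    _ = (1 + ε) * (∫ t in (0:ℝ)..1, (f t - g t) ^ 2)
          + (1 + ε⁻¹) * (∫ t in (0:ℝ)..1, f' t ^ 2) / (p:ℝ) ^ 2 := by
        rw [Finset.sum_add_distrib, ← Finset.mul_sum, ← Finset.mul_sum, hsum1, hsum2]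
        ring
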